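/- Let μ be a finite measure on ℕ with μ({1}) = 0 and μ({0}) > 0, and suppose Σ_{n≥0} n·μ({n}) < ∞. Define Φ(s) = Σ_{n≥0} (s^n − s)·μ({n}) for s ∈ [0,1] and η = inf{u > 0 : Φ(u) = 0}. Then 0 < η ≤ 1, Φ > 0 on [0,η), ∫_0^η du/Φ(u) = ∞, and the map F(t) = ∫_0^t du/Φ(u) is a strictly increasing bijection from (0,η) onto (0,∞). -/

import Mathlib

open MeasureTheory Set Filter Topology
open scoped ENNReal


lemma phi_summable {a : ℕ → ℝ} (ha : ∀ n, 0 ≤ a n) (hsa : Summable a) {s : ℝ} (hs : s ∈ Icc (0:ℝ) 1) :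
    Summable (fun n => (s ^ n - s) * a n) := by
  apply Summable.of_norm_bounded (hsa.mul_left 2)
  intro n
  rw [norm_mul, Real.norm_eq_abs, Real.norm_eq_abs, abs_of_nonneg (ha n)]
  have h1 : |s ^ n - s| ≤ 2 := by
    have h2 : |s ^ n| ≤ 1 := by
      rw [abs_of_nonneg (pow_nonneg hs.1 n)]
      exact pow_le_one₀ hs.1 hs.2
    have h3 : |s| ≤ 1 := by rw [abs_of_nonneg hs.1]; exact hs.2
    calc |s ^ n - s| ≤ |s ^ n| + |s| := abs_sub _ _
      _ ≤ 2 := by linarith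
  nlinarith [abs_nonneg (s ^ n - s), ha n]

lemma phi_contOn {a : ℕ → ℝ} (ha : ∀ n, 0 ≤ a n) (hsa : Summable a) :
    ContinuousOn (fun s : ℝ => ∑' n : ℕ, (s ^ n - s) * a n) (Icc 0 1) := by
  apply continuousOn_tsum (u := fun n => 2 * a n)
    (fun n => Continuous.continuousOn (by continuity)) (hsa.mul_left 2)
  intro n x hx
  rw [norm_mul, Real.norm_eq_abs, Real.norm_eq_abs, abs_of_nonneg (ha n)]
  have h2 : |x ^ n| ≤ 1 := by
    rw [abs_of_nonneg (pow_nonneg hx.1 n)]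
    exact pow_le_one₀ hx.1 hx.2
  have h3 : |x| ≤ 1 := by rw [abs_of_nonneg hx.1]; exact hx.2
  have h1 : |x ^ n - x| ≤ 2 := by
    calc |x ^ n - x| ≤ |x ^ n| + |x| := abs_sub _ _
      _ ≤ 2 := by linarith
  nlinarith [abs_nonneg (x ^ n - x), ha n]

lemma phi_zero {a : ℕ → ℝ} : (∑' n : ℕ, ((0:ℝ) ^ n - 0) * a n) = a 0 := by
  rw [tsum_eq_single 0]
  · norm_num
  · intro n hn
    rw [zero_pow hn]; ring

lemma phi_one {a : ℕ → ℝ} : (∑' n : ℕ, ((1:ℝ) ^ n - 1) * a n) = 0 := by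
  simp

lemma phi_convex_bound {a : ℕ → ℝ} (ha : ∀ n, 0 ≤ a n) (hsa : Summable a) {η u : ℝ}
    (hη0 : 0 < η) (hη1 : η ≤ 1) (hu : u ∈ Icc 0 η)
    (hΦη : (∑' n : ℕ, (η ^ n - η) * a n) = 0) :
    (∑' n : ℕ, (u ^ n - u) * a n) ≤ a 0 * (1 - u / η) := by
  set t := u / η with ht
  have ht0 : 0 ≤ t := div_nonneg hu.1 hη0.le
  have ht1 : t ≤ 1 := (div_le_one hη0).2 hu.2
  have hueq : (1 - t) * 0 + t * η = u := by
    rw [ht, div_mul_cancel₀ _ hη0.ne']; ring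
  have hterm : ∀ n : ℕ, (u ^ n - u) * a n ≤
      (1 - t) * (((0:ℝ) ^ n - 0) * a n) + t * ((η ^ n - η) * a n) := by
    intro n
    have hconv : ConvexOn ℝ (Ici 0) (fun s : ℝ => s ^ n - s) :=
      (convexOn_pow n).sub (concaveOn_id (convex_Ici 0))
    have key := hconv.2 (self_mem_Ici (a := (0:ℝ))) (le_of_lt hη0 : (0:ℝ) ≤ η)
      (by linarith : (0:ℝ) ≤ 1 - t) ht0 (by ring)
    simp only [smul_eq_mul] at key
    rw [hueq] at key
    nlinarith [ha n, key]
  have hL : Summable (fun n => (u ^ n - u) * a n) :=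
    phi_summable ha hsa ⟨hu.1, hu.2.trans hη1⟩
  have hR1 : Summable (fun n => (1 - t) * (((0:ℝ) ^ n - 0) * a n)) :=
    (phi_summable ha hsa ⟨le_refl 0, zero_le_one⟩).mul_left _
  have hR2 : Summable (fun n => t * ((η ^ n - η) * a n)) :=
    (phi_summable ha hsa ⟨hη0.le, hη1⟩).mul_left _
  calc (∑' n : ℕ, (u ^ n - u) * a n)
      ≤ ∑' n : ℕ, ((1 - t) * (((0:ℝ) ^ n - 0) * a n) + t * ((η ^ n - η) * a n)) :=
        Summable.tsum_le_tsum hterm hL (hR1.add hR2)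
    _ = (1 - t) * (∑' n : ℕ, ((0:ℝ) ^ n - 0) * a n) + t * (∑' n : ℕ, (η ^ n - η) * a n) := by
        rw [Summable.tsum_add hR1 hR2, tsum_mul_left, tsum_mul_left]
    _ = a 0 * (1 - t) := by rw [phi_zero, hΦη]; ring

lemma eta_facts (ha : ∀ n, 0 ≤ a n) (hsa : Summable a) (h0 : 0 < a 0) :
    let Φ : ℝ → ℝ := fun s => ∑' n : ℕ, (s ^ n - s) * a n
    let η : ℝ := sInf {u : ℝ | 0 < u ∧ Φ u = 0}
    0 < η ∧ η ≤ 1 ∧ Φ η = 0 ∧ (∀ u ∈ Ico (0:ℝ) η, 0 < Φ u) := by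
  intro Φ η
  have hΦcont : ContinuousOn Φ (Icc 0 1) := phi_contOn ha hsa
  have hΦ0 : Φ 0 = a 0 := phi_zero
  have hΦ1 : Φ 1 = 0 := phi_one
  have hS1 : (1:ℝ) ∈ {u : ℝ | 0 < u ∧ Φ u = 0} := ⟨one_pos, hΦ1⟩
  have hSne : Set.Nonempty {u : ℝ | 0 < u ∧ Φ u = 0} := ⟨1, hS1⟩
  have hbdd : BddBelow {u : ℝ | 0 < u ∧ Φ u = 0} := ⟨0, fun u hu => hu.1.le⟩
  have hη1 : η ≤ 1 := csInf_le hbdd hS1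
  -- positivity of η
  have hev : ∀ᶠ x in 𝓝[Icc (0:ℝ) 1] 0, 0 < Φ x :=
    (hΦcont 0 ⟨le_refl 0, zero_le_one⟩).eventually (eventually_gt_nhds (hΦ0 ▸ h0))
  rw [eventually_nhdsWithin_iff, Metric.eventually_nhds_iff] at hev
  obtain ⟨δ, hδ, hδpos⟩ := hev
  set b := min (δ/2) 1 with hb
  have hbpos : 0 < b := lt_min (by linarith) one_pos
  have hη0 : 0 < η := by
    refine lt_of_lt_of_le hbpos (le_csInf hSne ?_)
    intro u hu
    by_contra hlt
    push_neg at hlt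
    have hu1 : u ∈ Icc (0:ℝ) 1 := ⟨hu.1.le, hlt.le.trans (min_le_right _ _)⟩
    have hd : dist u 0 < δ := by
      rw [Real.dist_eq, sub_zero, abs_of_pos hu.1]
      exact hlt.trans_le ((min_le_left _ _).trans (by linarith))
    exact absurd hu.2 (hδpos hd hu1).ne'
  -- Φ η = 0
  have hΦη : Φ η = 0 := by
    rcases eq_or_lt_of_le hη1 with heq | hlt
    · rw [heq]; exact hΦ1
    · have hk : ∀ k : ℕ, ∃ u ∈ {u : ℝ | 0 < u ∧ Φ u = 0}, u < η + (1 - η) / (k + 1) := by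
        intro k
        refine exists_lt_of_csInf_lt hSne ?_
        have : 0 < (1 - η) / ((k:ℝ) + 1) := div_pos (by linarith) (by positivity)
        linarith
      choose u hu1 hu2 using hk
      have hmem : ∀ k, u k ∈ Icc (0:ℝ) 1 := by
        intro k
        refine ⟨(hu1 k).1.le, ?_⟩
        have h2 : (1 - η) / ((k:ℝ) + 1) ≤ 1 - η := by
          apply div_le_self (by linarith)
          simp [Nat.one_le_cast]
        have := hu2 k
        linarith
      have hlb : ∀ k, η ≤ u k := fun k => csInf_le hbdd (hu1 k)
      have hte : Tendsto u atTop (𝓝 η) := by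
        have hub : Tendsto (fun k : ℕ => η + (1 - η) * (1 / ((k:ℝ) + 1))) atTop (𝓝 η) := by
          have := tendsto_one_div_add_atTop_nhds_zero_nat.const_mul (1 - η)
          simpa using tendsto_const_nhds.add this
        refine tendsto_of_tendsto_of_tendsto_of_le_of_le tendsto_const_nhds hub hlb ?_
        intro k
        have := hu2 k
        rw [div_eq_mul_one_div] at this
        linarith [this]
      have hcomp : Tendsto (Φ ∘ u) atTop (𝓝 (Φ η)) :=
        (hΦcont η ⟨hη0.le, hη1⟩).tendsto.comp
          (tendsto_nhdsWithin_of_tendsto_nhds_of_eventually_within u hte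
            (Eventually.of_forall hmem))
      have hzero : Tendsto (Φ ∘ u) atTop (𝓝 0) := by
        have : (Φ ∘ u) = fun _ => (0:ℝ) := funext fun k => (hu1 k).2
        rw [this]; exact tendsto_const_nhds
      exact tendsto_nhds_unique hcomp hzero
  refine ⟨hη0, hη1, hΦη, ?_⟩
  intro v hv
  rcases eq_or_lt_of_le hv.1 with heq | hvpos
  · rw [← heq, hΦ0]; exact h0
  · rcases lt_trichotomy (Φ v) 0 with hneg | hzero | hposv
    · exfalso
      have hsub : Icc (0:ℝ) v ⊆ Icc 0 1 := Icc_subset_Icc le_rfl (hv.2.le.trans hη1)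
      have := intermediate_value_Icc' hv.1 (hΦcont.mono hsub)
      obtain ⟨w, hw, hfw⟩ := this ⟨hneg.le, hΦ0 ▸ h0.le⟩
      have hwpos : 0 < w := by
        rcases eq_or_lt_of_le hw.1 with h | h
        · exfalso; rw [← h, hΦ0] at hfw; exact h0.ne' hfw
        · exact h
      have : η ≤ w := csInf_le hbdd ⟨hwpos, hfw⟩
      linarith [hw.2, hv.2]
    · exact absurd (csInf_le hbdd ⟨hvpos, hzero⟩) (not_le.2 hv.2)
    · exact hposv
lemma div_top_lemma {Φ : ℝ → ℝ} {η a0 : ℝ} (hη0 : 0 < η) (h0 : 0 < a0)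
    (hpos : ∀ u ∈ Ico (0:ℝ) η, 0 < Φ u)
    (hub : ∀ u ∈ Icc (0:ℝ) η, Φ u ≤ a0 * (1 - u / η)) :
    ∫⁻ u in Ioo (0:ℝ) η, ENNReal.ofReal (1 / Φ u) = ⊤ := by
  by_contra h
  have hlt : ∫⁻ u in Ioo (0:ℝ) η, ENNReal.ofReal (1 / Φ u) < ⊤ := lt_top_iff_ne_top.2 h
  set g : ℝ → ℝ := fun u => (η / a0) * (η - u)⁻¹ with hg
  have hgle : ∀ u ∈ Ioo (0:ℝ) η, g u ≤ 1 / Φ u := by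
    intro u hu
    have hΦpos : 0 < Φ u := hpos u ⟨hu.1.le, hu.2⟩
    have h1u : 0 < 1 - u / η := by rw [sub_pos, div_lt_one hη0]; exact hu.2
    have hq : 0 < a0 * (1 - u / η) := by positivity
    have h2 : 1 / (a0 * (1 - u / η)) ≤ 1 / Φ u :=
      one_div_le_one_div_of_le hΦpos (hub u ⟨hu.1.le, hu.2.le⟩)
    have h3 : g u = 1 / (a0 * (1 - u / η)) := by
      rw [hg]
      have hηu : η - u ≠ 0 := by linarith [hu.2]
      field_simp
    rw [h3]; exact h2
  have hgmeas : Measurable g :=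
    measurable_const.mul ((measurable_const.sub measurable_id).inv)
  have hgnn : 0 ≤ᵐ[volume.restrict (Ioo (0:ℝ) η)] g := by
    rw [EventuallyLE, ae_restrict_iff' measurableSet_Ioo]
    filter_upwards with u hu
    have : 0 < η - u := by linarith [hu.2]
    simp only [Pi.zero_apply, hg]
    positivity
  have hgint : Integrable g (volume.restrict (Ioo (0:ℝ) η)) := by
    refine ⟨hgmeas.aestronglyMeasurable, ?_⟩
    rw [hasFiniteIntegral_iff_ofReal hgnn]
    refine lt_of_le_of_lt (lintegral_mono_ae ?_) hlt
    rw [ae_restrict_iff' measurableSet_Ioo]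
    filter_upwards with u hu
    exact ENNReal.ofReal_le_ofReal (hgle u hu)
  have hint2 : IntegrableOn (fun u => (u - η)⁻¹) (Ioo (0:ℝ) η) volume := by
    have h4 := (hgint.const_mul (a0 / η)).neg
    refine IntegrableOn.congr_fun h4 ?_ measurableSet_Ioo
    intro u hu
    have hηu : (η : ℝ) - u ≠ 0 := sub_ne_zero.2 (ne_of_gt hu.2)
    have key : a0 / η * (η / a0 * (η - u)⁻¹) = (η - u)⁻¹ := by
      field_simp
    simp only [Pi.neg_apply, hg]
    rw [key, show u - η = -(η - u) by ring, inv_neg]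
  have hii : IntervalIntegrable (fun u => (u - η)⁻¹) volume 0 η := by
    rw [intervalIntegrable_iff_integrableOn_Ioo_of_le hη0.le]
    exact hint2
  rw [intervalIntegrable_sub_inv_iff] at hii
  rcases hii with h5 | h5
  · exact hη0.ne h5
  · exact h5 right_mem_uIcc

lemma F_bij_lemma {Φ : ℝ → ℝ} {η : ℝ} (hη0 : 0 < η) (hη1 : η ≤ 1)
    (hΦcont : ContinuousOn Φ (Icc 0 1))
    (hpos : ∀ u ∈ Ico (0:ℝ) η, 0 < Φ u)
    (htop : ∫⁻ u in Ioo (0:ℝ) η, ENNReal.ofReal (1 / Φ u) = ⊤) :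
    let F : ℝ → ℝ := fun t => ∫ u in (0:ℝ)..t, 1 / Φ u
    StrictMonoOn F (Ioo 0 η) ∧ BijOn F (Ioo 0 η) (Ioi 0) := by
  intro F
  have hsub : Ico (0:ℝ) η ⊆ Icc 0 1 := fun x hx => ⟨hx.1, hx.2.le.trans hη1⟩
  have hcIco : ContinuousOn (fun u => 1 / Φ u) (Ico 0 η) :=
    ContinuousOn.div continuousOn_const (hΦcont.mono hsub) (fun x hx => (hpos x hx).ne')
  have hcIcc : ∀ {b : ℝ}, 0 ≤ b → b < η → ContinuousOn (fun u => 1 / Φ u) (Icc 0 b) :=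
    fun {b} hb0 hbη => hcIco.mono (fun x hx => ⟨hx.1, lt_of_le_of_lt hx.2 hbη⟩)
  have hII : ∀ {b : ℝ}, 0 ≤ b → b < η → IntervalIntegrable (fun u => 1 / Φ u) volume 0 b := by
    intro b hb0 hbη
    apply ContinuousOn.intervalIntegrable
    rw [uIcc_of_le hb0]
    exact hcIcc hb0 hbη
  -- F t2 = F t1 + ∫ t1..t2
  have hFadd : ∀ {t1 t2 : ℝ}, 0 ≤ t1 → t1 ≤ t2 → t2 < η →
      F t2 = F t1 + ∫ u in t1..t2, 1 / Φ u := by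
    intro t1 t2 h1 h12 h2
    rw [eq_comm]
    apply intervalIntegral.integral_add_adjacent_intervals (hII h1 (lt_of_le_of_lt h12 h2))
    exact (hII (h1.trans h12) h2).mono_set
      (uIcc_subset_uIcc (by rw [uIcc_of_le (h1.trans h12)]; exact ⟨h1, h12⟩)
        (by rw [uIcc_of_le (h1.trans h12)]; exact ⟨h1.trans h12, le_refl _⟩))
  have hstep : ∀ {t1 t2 : ℝ}, 0 ≤ t1 → t1 < t2 → t2 < η → F t1 < F t2 := by
    intro t1 t2 h1 h12 h2
    rw [hFadd h1 h12.le h2]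
    have hpos2 : 0 < ∫ u in t1..t2, 1 / Φ u := by
      apply intervalIntegral.intervalIntegral_pos_of_pos_on
      · exact (hII (h1.trans h12.le) h2).mono_set
          (uIcc_subset_uIcc (by rw [uIcc_of_le (h1.trans h12.le)]; exact ⟨h1, h12.le⟩)
            (by rw [uIcc_of_le (h1.trans h12.le)]; exact ⟨h1.trans h12.le, le_refl _⟩))
      · intro x hx
        have : 0 < Φ x := hpos x ⟨h1.trans hx.1.le, hx.2.trans h2⟩
        positivity
      · exact h12
    linarith
  have hmono : StrictMonoOn F (Ioo 0 η) := fun t1 h1 t2 h2 h12 => hstep h1.1.le h12 h2.2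
  have hF0 : F 0 = 0 := intervalIntegral.integral_same
  have hmaps : MapsTo F (Ioo 0 η) (Ioi 0) := by
    intro t ht
    have := hstep (le_refl 0) ht.1 ht.2
    rwa [hF0] at this
  refine ⟨hmono, hmaps, hmono.injOn, ?_⟩
  -- surjectivity
  intro y hy
  simp only [mem_Ioi] at hy
  -- Step 1 : ∃ b ∈ Ioo 0 η, y < F b
  have hbig : ∃ b ∈ Ioo (0:ℝ) η, y < F b := by
    by_contra hcon
    push_neg at hcon
    set f : ℝ → ℝ≥0∞ := fun u => ENNReal.ofReal (1 / Φ u) with hf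
    set t : ℕ → ℝ := fun k => η - η / (k + 2) with hT
    have htmem : ∀ k, t k ∈ Ioo (0:ℝ) η := by
      intro k
      constructor
      · have h2 : η / ((k:ℝ) + 2) < η := by
          rw [div_lt_iff₀ (by positivity)]
          nlinarith
        simp only [hT]; linarith
      · simp only [hT]
        have : 0 < η / ((k:ℝ) + 2) := by positivity
        linarith
    have htmono : Monotone t := by
      apply monotone_nat_of_le_succ
      intro k
      simp only [hT]
      have : η / ((k:ℝ) + 1 + 2) ≤ η / ((k:ℝ) + 2) := by
        apply div_le_div_of_nonneg_left hη0.le (by positivity) (by push_cast; linarith)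
      push_cast
      linarith
    have hfmeas : AEMeasurable f (volume.restrict (Ioo (0:ℝ) η)) :=
      ENNReal.measurable_ofReal.comp_aemeasurable
        ((hcIco.mono Ioo_subset_Ico_self).aemeasurable measurableSet_Ioo)
    set fk : ℕ → ℝ → ℝ≥0∞ := fun k => (Ioo (0:ℝ) (t k)).indicator f with hfk
    have hfkmeas : ∀ k, AEMeasurable (fk k) (volume.restrict (Ioo (0:ℝ) η)) :=
      fun k => hfmeas.indicator measurableSet_Ioo
    have hfkmono : ∀ᵐ u ∂(volume.restrict (Ioo (0:ℝ) η)), Monotone fun k => fk k u := by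
      filter_upwards with u
      apply monotone_nat_of_le_succ
      intro k
      simp only [hfk]
      apply Set.indicator_le_indicator_of_subset
      · exact Ioo_subset_Ioo le_rfl (htmono (Nat.le_succ k))
      · intro x; exact zero_le
    have hsup : ∀ᵐ u ∂(volume.restrict (Ioo (0:ℝ) η)), (⨆ k, fk k u) = f u := by
      rw [ae_restrict_iff' measurableSet_Ioo]
      filter_upwards with u hu
      obtain ⟨k, hk⟩ := exists_nat_gt (η / (η - u))
      have huη : 0 < η - u := by linarith [hu.2]
      have hkey : u < t k := by
        have h3 : η / ((k:ℝ) + 2) < η - u := by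
          rw [div_lt_iff₀ (by positivity)]
          have h4 : η / (η - u) < (k:ℝ) + 2 := by linarith [hk]
          rw [div_lt_iff₀ huη] at h4
          nlinarith
        simp only [hT]; linarith
      apply le_antisymm
      · apply iSup_le
        intro k'
        simp only [hfk]
        exact Set.indicator_le_self _ _ u
      · have : fk k u = f u := by
          simp only [hfk]
          rw [Set.indicator_of_mem (show u ∈ Ioo (0:ℝ) (t k) from ⟨hu.1, hkey⟩) f]
        rw [← this]
        exact le_iSup (fun k => fk k u) k
    have hlim := lintegral_iSup' hfkmeas hfkmono
    rw [lintegral_congr_ae hsup, htop] at hlim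
    -- each term is ≤ ofReal y
    have hbound : ∀ k, (∫⁻ u in Ioo (0:ℝ) η, fk k u) ≤ ENNReal.ofReal y := by
      intro k
      rw [hfk]
      simp only
      rw [lintegral_indicator measurableSet_Ioo _, Measure.restrict_restrict measurableSet_Ioo,
        inter_eq_self_of_subset_left (Ioo_subset_Ioo le_rfl (htmem k).2.le)]
      have hint : IntegrableOn (fun u => 1 / Φ u) (Ioo 0 (t k)) volume :=
        (((hcIcc (htmem k).1.le (htmem k).2).integrableOn_Icc)).mono_set Ioo_subset_Icc_self
      have hnn : 0 ≤ᵐ[volume.restrict (Ioo (0:ℝ) (t k))] fun u => 1 / Φ u := by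
        rw [EventuallyLE, ae_restrict_iff' measurableSet_Ioo]
        filter_upwards with u hu
        simp only [Pi.zero_apply]
        have : 0 < Φ u := hpos u ⟨hu.1.le, hu.2.trans (htmem k).2⟩
        positivity
      rw [hf]
      simp only
      rw [← ofReal_integral_eq_lintegral_ofReal hint hnn]
      apply ENNReal.ofReal_le_ofReal
      have : ∫ u in Ioo (0:ℝ) (t k), 1 / Φ u = F (t k) := by
        rw [← integral_Ioc_eq_integral_Ioo, ← intervalIntegral.integral_of_le (htmem k).1.le]
      rw [this]
      exact hcon _ (htmem k)
    have : (⨆ k, ∫⁻ u in Ioo (0:ℝ) η, fk k u) ≤ ENNReal.ofReal y := iSup_le hbound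
    rw [← hlim] at this
    exact absurd (this.trans_lt ENNReal.ofReal_lt_top) (by simp)
  obtain ⟨b, hb, hby⟩ := hbig
  -- Step 2: F continuous on Icc 0 b
  have hFc : ContinuousOn F (Icc 0 b) := by
    have := intervalIntegral.continuousOn_primitive_interval
      (a := 0) (b := b) (μ := volume) (f := fun u => 1 / Φ u)
      (by rw [uIcc_of_le hb.1.le]; exact (hcIcc hb.1.le hb.2).integrableOn_Icc)
    rwa [uIcc_of_le hb.1.le] at this
  -- Step 3: ∃ s ∈ Ioo 0 b, F s < y
  have hsmall : ∃ s ∈ Ioo (0:ℝ) b, F s < y := by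
    have hev : ∀ᶠ x in 𝓝[Icc (0:ℝ) b] 0, F x < y :=
      (hFc 0 ⟨le_refl 0, hb.1.le⟩).eventually (eventually_lt_nhds (by rw [hF0]; exact hy))
    have hev2 : ∀ᶠ x in 𝓝[Ioo (0:ℝ) b] 0, F x < y :=
      hev.filter_mono (nhdsWithin_mono _ Ioo_subset_Icc_self)
    have : NeBot (𝓝[Ioo (0:ℝ) b] 0) := left_nhdsWithin_Ioo_neBot hb.1
    obtain ⟨s, hs1, hs2⟩ := (hev2.and eventually_mem_nhdsWithin).exists
    exact ⟨s, hs2, hs1⟩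
  obtain ⟨s, hs, hsy⟩ := hsmall
  -- Step 4: IVT
  have hFc2 : ContinuousOn F (Icc s b) := hFc.mono (Icc_subset_Icc hs.1.le le_rfl)
  have := intermediate_value_Ioo hs.2.le hFc2
  obtain ⟨w, hw, hFw⟩ := this ⟨hsy, hby⟩
  exact ⟨w, ⟨hs.1.trans hw.1, hw.2.trans hb.2⟩, hFw⟩


theorem coalescence_stmt0 (μ : Measure ℕ) [IsFiniteMeasure μ]
    (h1 : μ {1} = 0) (h0 : 0 < μ {0})
    (hmom : Summable fun n : ℕ => (n : ℝ) * (μ {n}).toReal) :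
    let Φ : ℝ → ℝ := fun s => ∑' n : ℕ, (s ^ n - s) * (μ {n}).toReal
    let η : ℝ := sInf {u : ℝ | 0 < u ∧ Φ u = 0}
    let F : ℝ → ℝ := fun t => ∫ u in (0:ℝ)..t, 1 / Φ u
    0 < η ∧ η ≤ 1 ∧ (∀ u ∈ Ico (0:ℝ) η, 0 < Φ u) ∧
      (∫⁻ u in Ioo (0:ℝ) η, ENNReal.ofReal (1 / Φ u) = ⊤) ∧
      StrictMonoOn F (Ioo 0 η) ∧ BijOn F (Ioo 0 η) (Ioi 0) := by
  intro Φ η F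
  set a : ℕ → ℝ := fun n => (μ {n}).toReal with haa
  have ha : ∀ n, 0 ≤ a n := fun n => ENNReal.toReal_nonneg
  have hsa : Summable a := by
    apply ENNReal.summable_toReal
    have heq : ∑' n : ℕ, μ {n} = μ univ := by
      rw [← measure_iUnion (fun i j hij => by
        simp only [Function.onFun]
        exact Set.disjoint_singleton.2 hij) (fun i => measurableSet_singleton i)]
      rw [iUnion_of_singleton]
    rw [heq]
    exact measure_ne_top μ _
  have h0R : 0 < a 0 := ENNReal.toReal_pos h0.ne' (measure_ne_top μ _)
  obtain ⟨hη0, hη1, hΦη, hpos⟩ := eta_facts ha hsa h0R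
  have hub : ∀ u ∈ Icc (0:ℝ) η, Φ u ≤ a 0 * (1 - u / η) :=
    fun u hu => phi_convex_bound ha hsa hη0 hη1 hu hΦη
  have htop : ∫⁻ u in Ioo (0:ℝ) η, ENNReal.ofReal (1 / Φ u) = ⊤ :=
    div_top_lemma hη0 h0R hpos hub
  obtain ⟨hmono, hbij⟩ := F_bij_lemma hη0 hη1 (phi_contOn ha hsa) hpos htop
  exact ⟨hη0, hη1, hpos, htop, hmono, hbij⟩
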